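/- Regret decomposition under estimate perturbation: Let Reg_T and Reg_T^{ref} denote the expected cumulative losses of two exponential-weights algorithms facing the same deterministic loss sequence l_{a,t} ∈ [0,1], where the first uses cumulative loss estimates L̂_{t−1} and the second uses L̃_{t−1}, both with the same learning rate η > 0. If max_a |L̂_{a,t−1} − L̃_{a,t−1}| ≤ M_{t−1} for all t, then E[Reg_T] − E[Reg_T^{ref}] ≤ (η|V|/2) ∑_{t=1}^T E[M_{t−1}], where |V| is the number of actions. -/

import Mathlib

-- key1: exp t - 1 ≤ t * (exp t + 1) / 2 for t ≥ 0
lemma aux_key1 (t : ℝ) (ht : 0 ≤ t) : Real.exp t - 1 ≤ t * (Real.exp t + 1) / 2 := by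
  have hmono : MonotoneOn (fun s : ℝ => s * (Real.exp s + 1) / 2 - Real.exp s + 1) (Set.Ici 0) := by
    have hderiv : ∀ s : ℝ, HasDerivAt (fun s : ℝ => s * (Real.exp s + 1) / 2 - Real.exp s + 1)
        ((1 * (Real.exp s + 1) + s * Real.exp s) / 2 - Real.exp s) s := by
      intro s
      have h1 : HasDerivAt (fun s : ℝ => s * (Real.exp s + 1))
          (1 * (Real.exp s + 1) + s * Real.exp s) s :=
        (hasDerivAt_id s).mul ((Real.hasDerivAt_exp s).add_const 1)
      exact ((h1.div_const 2).sub (Real.hasDerivAt_exp s)).add_const 1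
    apply monotoneOn_of_deriv_nonneg (convex_Ici 0)
    · exact Continuous.continuousOn (by continuity)
    · intro s _
      exact (hderiv s).differentiableAt.differentiableWithinAt
    · intro s hs
      rw [(hderiv s).deriv]
      simp only [interior_Ici, Set.mem_Ioi] at hs
      have h2 : Real.exp s * (1 - s) ≤ 1 := by
        have h3 := Real.add_one_le_exp (-s)
        rw [Real.exp_neg] at h3
        have h4 : Real.exp s * (Real.exp s)⁻¹ = 1 := mul_inv_cancel₀ (Real.exp_ne_zero s)
        nlinarith [Real.exp_pos s]
      nlinarith
  have h0 := hmono (Set.mem_Ici.mpr le_rfl) (Set.mem_Ici.mpr ht) ht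
  simp only at h0
  rw [Real.exp_zero] at h0
  nlinarith [h0]

lemma aux_exp_diff (u v : ℝ) :
    |Real.exp u - Real.exp v| ≤ (Real.exp u + Real.exp v) / 2 * |u - v| := by
  have main : ∀ u v : ℝ, v ≤ u →
      Real.exp u - Real.exp v ≤ (Real.exp u + Real.exp v) / 2 * (u - v) := by
    intro u v h
    have h1 := aux_key1 (u - v) (sub_nonneg.mpr h)
    have h3 : Real.exp (u - v) * Real.exp v = Real.exp u := by
      rw [← Real.exp_add]; ring_nf
    nlinarith [Real.exp_pos v, mul_le_mul_of_nonneg_right h1 (Real.exp_pos v).le]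
  rcases le_total v u with h | h
  · rw [abs_of_nonneg (sub_nonneg.mpr (Real.exp_le_exp.mpr h)), abs_of_nonneg (sub_nonneg.mpr h)]
    exact main u v h
  · rw [abs_sub_comm, abs_sub_comm u v,
      abs_of_nonneg (sub_nonneg.mpr (Real.exp_le_exp.mpr h)), abs_of_nonneg (sub_nonneg.mpr h)]
    calc Real.exp v - Real.exp u ≤ (Real.exp v + Real.exp u) / 2 * (v - u) := main v u h
      _ = (Real.exp u + Real.exp v) / 2 * (v - u) := by ring

lemma aux_softmax_pt {V : Type*} [Fintype V] [Nonempty V] (x y l : V → ℝ)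
    (hl : ∀ a, l a ∈ Set.Icc (0 : ℝ) 1) {c : ℝ} (hc0 : 0 ≤ c) (hc : ∀ a, |x a - y a| ≤ c) :
    (∑ a, Real.exp (x a) / (∑ b, Real.exp (x b)) * l a)
      - ∑ a, Real.exp (y a) / (∑ b, Real.exp (y b)) * l a
      ≤ (Fintype.card V : ℝ) / 2 * c := by
  have hcard : 1 ≤ Fintype.card V := Fintype.card_pos
  rcases hcard.eq_or_lt with hone | htwo
  · -- singleton case: the two sums are equal
    obtain ⟨a0, ha0⟩ := Fintype.card_eq_one_iff.mp hone.symm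
    have hsum : ∀ f : V → ℝ, ∑ b, f b = f a0 := by
      intro f
      exact Finset.sum_eq_single_of_mem a0 (Finset.mem_univ a0)
        (fun b _ hb => absurd (ha0 b) hb)
    have e1 : (∑ a, Real.exp (x a) / (∑ b, Real.exp (x b)) * l a) = l a0 := by
      rw [hsum, hsum, div_self (Real.exp_ne_zero _), one_mul]
    have e2 : (∑ a, Real.exp (y a) / (∑ b, Real.exp (y b)) * l a) = l a0 := by
      rw [hsum, hsum, div_self (Real.exp_ne_zero _), one_mul]
    rw [e1, e2, sub_self]
    positivity
  · set X := ∑ b, Real.exp (x b) with hXdef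
    set Y := ∑ b, Real.exp (y b) with hYdef
    have hX : 0 < X := Finset.sum_pos (fun b _ => Real.exp_pos _) Finset.univ_nonempty
    have hY : 0 < Y := Finset.sum_pos (fun b _ => Real.exp_pos _) Finset.univ_nonempty
    set P : V → ℝ := fun a => Real.exp (x a) / X with hP
    set Q : V → ℝ := fun a => Real.exp (y a) / Y with hQ
    have hsumP : ∑ a, P a = 1 := by rw [hP]; rw [← Finset.sum_div]; exact div_self hX.ne'
    have hsumQ : ∑ a, Q a = 1 := by rw [hQ]; rw [← Finset.sum_div]; exact div_self hY.ne'
    -- per coordinate bound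
    have hcoord : ∀ a, |P a - Q a| ≤ c * (P a + Q a) := by
      intro a
      have hnum : Real.exp (x a) * Y - Real.exp (y a) * X
          = ∑ b, (Real.exp (x a + y b) - Real.exp (y a + x b)) := by
        rw [hXdef, hYdef, Finset.mul_sum, Finset.mul_sum, ← Finset.sum_sub_distrib]
        exact Finset.sum_congr rfl fun b _ => by rw [Real.exp_add, Real.exp_add]
      have habs : |Real.exp (x a) * Y - Real.exp (y a) * X|
          ≤ c * (Real.exp (x a) * Y + Real.exp (y a) * X) := by
        rw [hnum]
        calc |∑ b, (Real.exp (x a + y b) - Real.exp (y a + x b))|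
            ≤ ∑ b, |Real.exp (x a + y b) - Real.exp (y a + x b)| :=
              Finset.abs_sum_le_sum_abs _ _
          _ ≤ ∑ b, (Real.exp (x a + y b) + Real.exp (y a + x b)) / 2 * (2 * c) := by
              refine Finset.sum_le_sum fun b _ => ?_
              refine (aux_exp_diff _ _).trans ?_
              have h1 : |x a + y b - (y a + x b)| ≤ 2 * c := by
                have h2 : x a + y b - (y a + x b) = (x a - y a) - (x b - y b) := by ring
                rw [h2]
                calc |(x a - y a) - (x b - y b)| ≤ |x a - y a| + |x b - y b| := abs_sub _ _
                  _ ≤ 2 * c := by have := hc a; have := hc b; linarith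
              have hpos : (0:ℝ) ≤ (Real.exp (x a + y b) + Real.exp (y a + x b)) / 2 := by positivity
              exact mul_le_mul_of_nonneg_left h1 hpos
          _ = c * (Real.exp (x a) * Y + Real.exp (y a) * X) := by
              rw [hXdef, hYdef, Finset.mul_sum, Finset.mul_sum, ← Finset.sum_add_distrib,
                Finset.mul_sum]
              exact Finset.sum_congr rfl fun b _ => by rw [Real.exp_add, Real.exp_add]; ring
      have heq : P a - Q a = (Real.exp (x a) * Y - Real.exp (y a) * X) / (X * Y) := by
        rw [hP, hQ]
        field_simp
      have heq2 : (P a + Q a) * (X * Y) = Real.exp (x a) * Y + Real.exp (y a) * X := by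
        rw [hP, hQ]
        field_simp
      rw [heq, abs_div, abs_of_pos (mul_pos hX hY), div_le_iff₀ (mul_pos hX hY)]
      calc |Real.exp (x a) * Y - Real.exp (y a) * X|
          ≤ c * (Real.exp (x a) * Y + Real.exp (y a) * X) := habs
        _ = c * (P a + Q a) * (X * Y) := by rw [← heq2]; ring
    -- main chain
    have hid : (∑ a, P a * l a) - ∑ a, Q a * l a = ∑ a, (P a - Q a) * (l a - 1/2) := by
      have : ∑ a, (P a - Q a) * (l a - 1/2)
          = ((∑ a, P a * l a) - ∑ a, Q a * l a) - 1/2 * ((∑ a, P a) - ∑ a, Q a) := by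
        simp only [sub_mul, mul_sub, Finset.sum_sub_distrib, ← Finset.sum_mul]
        ring
      rw [this, hsumP, hsumQ]
      ring
    calc (∑ a, P a * l a) - ∑ a, Q a * l a
        = ∑ a, (P a - Q a) * (l a - 1/2) := hid
      _ ≤ ∑ a, c * (P a + Q a) * (1/2) := by
          refine Finset.sum_le_sum fun a _ => ?_
          calc (P a - Q a) * (l a - 1/2) ≤ |(P a - Q a) * (l a - 1/2)| := le_abs_self _
            _ = |P a - Q a| * |l a - 1/2| := abs_mul _ _
            _ ≤ (c * (P a + Q a)) * (1/2) := by
                refine mul_le_mul (hcoord a) ?_ (abs_nonneg _) ?_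
                · rw [abs_le]; obtain ⟨h1, h2⟩ := hl a; constructor <;> linarith
                · have hPa : 0 ≤ P a := by rw [hP]; positivity
                  have hQa : 0 ≤ Q a := by rw [hQ]; positivity
                  positivity
      _ = c := by
          rw [show (∑ a, c * (P a + Q a) * (1/2)) = c/2 * ((∑ a, P a) + ∑ a, Q a) from ?_,
            hsumP, hsumQ]
          · ring
          · simp only [mul_add, add_mul, Finset.sum_add_distrib, ← Finset.sum_mul,
              ← Finset.mul_sum]
            ring
      _ ≤ (Fintype.card V : ℝ) / 2 * c := by
          have h2 : (2:ℝ) ≤ (Fintype.card V : ℝ) := by exact_mod_cast htwo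
          nlinarith


open MeasureTheory

/-- Regret decomposition under estimate perturbation: two
exponential-weights algorithms with the same learning rate `η > 0` face the
same deterministic loss sequence `l_{a,t} ∈ [0,1]`; one uses the cumulative
loss estimates `L̂_{t-1}`, the other `L̃_{t-1}`, sampling from the softmax
distributions `p̂_{a,t} ∝ exp(-η L̂_{a,t-1})` and `p_{a,t} ∝ exp(-η L̃_{a,t-1})`.
If `max_a |L̂_{a,t-1} - L̃_{a,t-1}| ≤ M_{t-1}`, the difference of expected
cumulative losses (expressed via the sampling distributions) is at most
`(η |V| / 2) ∑_t E[M_{t-1}]`. -/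
theorem regret_decomposition_estimate_perturbation
    {Ω : Type*} {m0 : MeasurableSpace Ω} (μ : Measure Ω) [IsProbabilityMeasure μ]
    {V : Type*} [Fintype V] [Nonempty V]
    (T : ℕ) (η : ℝ) (hη : 0 < η)
    (l : V → ℕ → ℝ) (hl : ∀ a t, l a t ∈ Set.Icc (0 : ℝ) 1)
    (Lhat Ltil : ℕ → Ω → V → ℝ) (M : ℕ → Ω → ℝ)
    (phat p : ℕ → Ω → V → ℝ)
    (hphat : ∀ t ω a, phat t ω a
      = Real.exp (-η * Lhat t ω a) / ∑ b, Real.exp (-η * Lhat t ω b))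
    (hp : ∀ t ω a, p t ω a
      = Real.exp (-η * Ltil t ω a) / ∑ b, Real.exp (-η * Ltil t ω b))
    (hM : ∀ t ω a, |Lhat t ω a - Ltil t ω a| ≤ M t ω)
    (hintphat : ∀ t, Integrable (fun ω => ∑ a, phat t ω a * l a t) μ)
    (hintp : ∀ t, Integrable (fun ω => ∑ a, p t ω a * l a t) μ)
    (hintM : ∀ t, Integrable (M t) μ) :
    (∑ t ∈ Finset.range T, ∫ ω, ∑ a, phat t ω a * l a t ∂μ)
      - (∑ t ∈ Finset.range T, ∫ ω, ∑ a, p t ω a * l a t ∂μ)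
      ≤ (η * (Fintype.card V : ℝ) / 2) * ∑ t ∈ Finset.range T, ∫ ω, M t ω ∂μ := by
  have hMnonneg : ∀ t ω, 0 ≤ M t ω := fun t ω =>
    le_trans (abs_nonneg _) (hM t ω (Classical.arbitrary V))
  -- pointwise bound
  have hpt : ∀ t ω, (∑ a, phat t ω a * l a t) - (∑ a, p t ω a * l a t)
      ≤ (η * (Fintype.card V : ℝ) / 2) * M t ω := by
    intro t ω
    have hc : ∀ a, |(fun a => -η * Lhat t ω a) a - (fun a => -η * Ltil t ω a) a|
        ≤ η * M t ω := by
      intro a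
      simp only
      have h1 : -η * Lhat t ω a - -η * Ltil t ω a = η * (Ltil t ω a - Lhat t ω a) := by ring
      rw [h1, abs_mul, abs_of_pos hη]
      refine mul_le_mul_of_nonneg_left ?_ hη.le
      rw [abs_sub_comm]
      exact hM t ω a
    have key := aux_softmax_pt (fun a => -η * Lhat t ω a) (fun a => -η * Ltil t ω a)
      (fun a => l a t) (fun a => hl a t)
      (mul_nonneg hη.le (hMnonneg t ω)) hc
    calc (∑ a, phat t ω a * l a t) - (∑ a, p t ω a * l a t)
        = (∑ a, Real.exp (-η * Lhat t ω a) / (∑ b, Real.exp (-η * Lhat t ω b)) * l a t)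
          - ∑ a, Real.exp (-η * Ltil t ω a) / (∑ b, Real.exp (-η * Ltil t ω b)) * l a t := by
          simp only [hphat, hp]
      _ ≤ (Fintype.card V : ℝ) / 2 * (η * M t ω) := key
      _ = (η * (Fintype.card V : ℝ) / 2) * M t ω := by ring
  have hint : ∀ t, (∫ ω, ∑ a, phat t ω a * l a t ∂μ) - (∫ ω, ∑ a, p t ω a * l a t ∂μ)
      ≤ (η * (Fintype.card V : ℝ) / 2) * ∫ ω, M t ω ∂μ := by
    intro t
    rw [← integral_sub (hintphat t) (hintp t), ← integral_const_mul]
    exact integral_mono ((hintphat t).sub (hintp t))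
      (((hintM t).const_mul _)) (fun ω => hpt t ω)
  calc (∑ t ∈ Finset.range T, ∫ ω, ∑ a, phat t ω a * l a t ∂μ)
      - (∑ t ∈ Finset.range T, ∫ ω, ∑ a, p t ω a * l a t ∂μ)
      = ∑ t ∈ Finset.range T,
          ((∫ ω, ∑ a, phat t ω a * l a t ∂μ) - ∫ ω, ∑ a, p t ω a * l a t ∂μ) :=
        (Finset.sum_sub_distrib _ _).symm
    _ ≤ ∑ t ∈ Finset.range T, (η * (Fintype.card V : ℝ) / 2) * ∫ ω, M t ω ∂μ :=
        Finset.sum_le_sum fun t _ => hint t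
    _ = (η * (Fintype.card V : ℝ) / 2) * ∑ t ∈ Finset.range T, ∫ ω, M t ω ∂μ :=
        (Finset.mul_sum _ _ _).symm
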